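/- Let p be a prime, B(x) ∈ M_n(𝔽_p(x)) with Δ(F) = F' + B·F satisfying Δ^p = 0. Then the map P: 𝔽_p(x)^n → 𝔽_p(x)^n defined by P(F) = Σ_{k=0}^{p−1} (−1)^k·(x^k/k!)·Δ^k(F) takes values in ker Δ, and every F ∈ 𝔽_p(x)^n satisfies F = Σ_{k=0}^{p−1} (x^k/k!)·P(Δ^k(F)). -/

import Mathlib

open Polynomial

/-- Formal derivative of a rational function, via the quotient rule on the
canonical numerator/denominator representation. -/
noncomputable def rderiv {F : Type*} [Field F] (f : RatFunc F) : RatFunc F :=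
  algebraMap (Polynomial F) (RatFunc F)
      (Polynomial.derivative f.num * f.denom - f.num * Polynomial.derivative f.denom) /
    algebraMap (Polynomial F) (RatFunc F) (f.denom ^ 2)

section rderiv_lemmas
variable {F : Type*} [Field F]

lemma rderiv_quot (a b : F[X]) (hb : b ≠ 0) :
    rderiv (algebraMap F[X] (RatFunc F) a / algebraMap F[X] (RatFunc F) b) =
      algebraMap F[X] (RatFunc F) (derivative a * b - a * derivative b) /
        algebraMap F[X] (RatFunc F) (b ^ 2) := by
  set f := algebraMap F[X] (RatFunc F) a / algebraMap F[X] (RatFunc F) b with hf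
  have hd : f.denom ≠ 0 := f.denom_ne_zero
  have hb' : algebraMap F[X] (RatFunc F) b ≠ 0 := RatFunc.algebraMap_ne_zero hb
  have hd' : algebraMap F[X] (RatFunc F) f.denom ≠ 0 := RatFunc.algebraMap_ne_zero hd
  have key : a * f.denom = f.num * b := by
    have h1 : algebraMap F[X] (RatFunc F) a / algebraMap F[X] (RatFunc F) b =
        algebraMap F[X] (RatFunc F) f.num / algebraMap F[X] (RatFunc F) f.denom := by
      rw [RatFunc.num_div_denom]
    rw [div_eq_div_iff hb' hd', ← map_mul, ← map_mul] at h1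
    exact RatFunc.algebraMap_injective F h1
  have key' : derivative a * f.denom + a * derivative f.denom =
      derivative f.num * b + f.num * derivative b := by
    have := congrArg derivative key
    simpa [derivative_mul] using this
  rw [rderiv, div_eq_div_iff (RatFunc.algebraMap_ne_zero (pow_ne_zero 2 hd))
    (RatFunc.algebraMap_ne_zero (pow_ne_zero 2 hb)), ← map_mul, ← map_mul]
  congr 1
  linear_combination (derivative f.denom * b + derivative b * f.denom) * key -
    (f.denom * b) * key'

lemma rderiv_algebraMap (a : F[X]) :
    rderiv (algebraMap F[X] (RatFunc F) a) = algebraMap F[X] (RatFunc F) (derivative a) := by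
  have := rderiv_quot a 1 one_ne_zero
  simpa using this

lemma rderiv_quot_add (a b c d : F[X]) (hb : b ≠ 0) (hd : d ≠ 0) :
    rderiv (algebraMap F[X] (RatFunc F) a / algebraMap F[X] (RatFunc F) b +
        algebraMap F[X] (RatFunc F) c / algebraMap F[X] (RatFunc F) d) =
      rderiv (algebraMap F[X] (RatFunc F) a / algebraMap F[X] (RatFunc F) b) +
        rderiv (algebraMap F[X] (RatFunc F) c / algebraMap F[X] (RatFunc F) d) := by
  have hb' : algebraMap F[X] (RatFunc F) b ≠ 0 := RatFunc.algebraMap_ne_zero hb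
  have hd' : algebraMap F[X] (RatFunc F) d ≠ 0 := RatFunc.algebraMap_ne_zero hd
  rw [div_add_div _ _ hb' hd', ← map_mul, ← map_mul, ← map_mul, ← map_add,
    rderiv_quot _ _ (mul_ne_zero hb hd), rderiv_quot _ _ hb, rderiv_quot _ _ hd]
  simp only [derivative_add, derivative_mul, map_add, map_mul, map_sub, map_pow]
  field_simp
  ring

lemma rderiv_quot_mul (a b c d : F[X]) (hb : b ≠ 0) (hd : d ≠ 0) :
    rderiv (algebraMap F[X] (RatFunc F) a / algebraMap F[X] (RatFunc F) b *
        (algebraMap F[X] (RatFunc F) c / algebraMap F[X] (RatFunc F) d)) =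
      rderiv (algebraMap F[X] (RatFunc F) a / algebraMap F[X] (RatFunc F) b) *
          (algebraMap F[X] (RatFunc F) c / algebraMap F[X] (RatFunc F) d) +
        algebraMap F[X] (RatFunc F) a / algebraMap F[X] (RatFunc F) b *
          rderiv (algebraMap F[X] (RatFunc F) c / algebraMap F[X] (RatFunc F) d) := by
  have hb' : algebraMap F[X] (RatFunc F) b ≠ 0 := RatFunc.algebraMap_ne_zero hb
  have hd' : algebraMap F[X] (RatFunc F) d ≠ 0 := RatFunc.algebraMap_ne_zero hd
  rw [div_mul_div_comm, ← map_mul, ← map_mul, rderiv_quot _ _ (mul_ne_zero hb hd),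
    rderiv_quot _ _ hb, rderiv_quot _ _ hd]
  simp only [derivative_mul, map_add, map_mul, map_sub, map_pow]
  field_simp
  ring

lemma rderiv_add (f g : RatFunc F) : rderiv (f + g) = rderiv f + rderiv g := by
  rw [← RatFunc.num_div_denom f, ← RatFunc.num_div_denom g]
  exact rderiv_quot_add _ _ _ _ f.denom_ne_zero g.denom_ne_zero

lemma rderiv_mul (f g : RatFunc F) : rderiv (f * g) = rderiv f * g + f * rderiv g := by
  rw [← RatFunc.num_div_denom f, ← RatFunc.num_div_denom g]
  exact rderiv_quot_mul _ _ _ _ f.denom_ne_zero g.denom_ne_zero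

lemma rderiv_zero : rderiv (0 : RatFunc F) = 0 := by
  have := rderiv_algebraMap (0 : F[X])
  simpa using this

lemma rderiv_natCast (m : ℕ) : rderiv ((m : RatFunc F)) = 0 := by
  have h : ((m : RatFunc F)) = algebraMap F[X] (RatFunc F) (m : F[X]) := by
    rw [map_natCast]
  rw [h, rderiv_algebraMap]
  simp

lemma rderiv_one : rderiv ((1 : RatFunc F)) = 0 := by
  simpa using rderiv_natCast (F := F) 1

lemma rderiv_X_pow (k : ℕ) :
    rderiv ((RatFunc.X : RatFunc F) ^ k) = (k : RatFunc F) * RatFunc.X ^ (k - 1) := by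
  rw [← RatFunc.algebraMap_X, ← map_pow, rderiv_algebraMap, derivative_X_pow, map_mul,
    map_pow, Polynomial.C_eq_natCast, map_natCast, RatFunc.algebraMap_X]

lemma rderiv_inv_natCast (m : ℕ) : rderiv ((m : RatFunc F)⁻¹) = 0 := by
  rcases eq_or_ne ((m : RatFunc F)) 0 with h | h
  · rw [h, inv_zero, rderiv_zero]
  · have h2 : ((m : RatFunc F)) * ((m : RatFunc F))⁻¹ = 1 := mul_inv_cancel₀ h
    have := congrArg rderiv h2
    rw [rderiv_mul, rderiv_one, rderiv_natCast, zero_mul, zero_add] at this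
    exact (mul_eq_zero.mp this).resolve_left h
end rderiv_lemmas

section helpers
variable {K : Type*} [Field K]

lemma alt_choose_sum (m : ℕ) (hm : m ≠ 0) :
    ∑ k ∈ Finset.range (m + 1), (-1 : K) ^ (m - k) * (m.choose k : K) = 0 := by
  have base : ((∑ i ∈ Finset.range (m + 1), (-1 : ℤ) ^ i * (m.choose i : ℤ) : ℤ) : K) = 0 := by
    rw [Int.alternating_sum_range_choose_of_ne hm]; simp
  push_cast at base
  have hrefl := Finset.sum_range_reflect (fun j => (-1 : K) ^ j * (m.choose j : K)) (m + 1)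
  have congr1 : ∑ j ∈ Finset.range (m + 1), (-1 : K) ^ (m - j) * (m.choose (m - j) : K) =
      ∑ j ∈ Finset.range (m + 1), (-1 : K) ^ (m - j) * (m.choose j : K) := by
    apply Finset.sum_congr rfl
    intro j hj
    rw [Nat.choose_symm (Nat.lt_succ_iff.mp (Finset.mem_range.mp hj))]
  have : ∑ j ∈ Finset.range (m + 1), (-1 : K) ^ (m + 1 - 1 - j) * (m.choose (m + 1 - 1 - j) : K) =
      ∑ j ∈ Finset.range (m + 1), (-1 : K) ^ j * (m.choose j : K) := hrefl
  simp only [Nat.add_sub_cancel] at this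
  rw [← congr1, this, base]

lemma alt_fact_sum (m : ℕ) (hm : m ≠ 0)
    (hfac : ∀ k ≤ m, ((k.factorial : K)) ≠ 0) :
    ∑ k ∈ Finset.range (m + 1),
      (-1 : K) ^ (m - k) / ((k.factorial : K) * ((m - k).factorial : K)) = 0 := by
  have step : ∀ k ∈ Finset.range (m + 1),
      (-1 : K) ^ (m - k) / ((k.factorial : K) * ((m - k).factorial : K)) =
        (-1 : K) ^ (m - k) * (m.choose k : K) / (m.factorial : K) := by
    intro k hk
    have hkm : k ≤ m := Nat.lt_succ_iff.mp (Finset.mem_range.mp hk)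
    have hnat : (m.choose k : K) * (k.factorial : K) * ((m - k).factorial : K) =
        (m.factorial : K) := by
      exact_mod_cast congrArg (Nat.cast : ℕ → K)
        (Nat.choose_mul_factorial_mul_factorial hkm)
    have h1 := hfac k hkm
    have h2 := hfac (m - k) (Nat.sub_le m k)
    have h3 := hfac m le_rfl
    rw [div_eq_div_iff (mul_ne_zero h1 h2) h3]
    linear_combination (-(-1 : K) ^ (m - k)) * hnat
  rw [Finset.sum_congr rfl step, ← Finset.sum_div, alt_choose_sum m hm]
  simp
end helpers

section more
variable {F : Type*} [Field F]

lemma rderiv_neg (f : RatFunc F) : rderiv (-f) = -rderiv f := by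
  have h := rderiv_add f (-f)
  rw [add_neg_cancel, rderiv_zero] at h
  exact (eq_neg_of_add_eq_zero_right h.symm)

lemma rderiv_neg_one_pow (k : ℕ) : rderiv ((-1 : RatFunc F) ^ k) = 0 := by
  induction k with
  | zero => simpa using rderiv_one
  | succ k ih =>
      rw [pow_succ, rderiv_mul, ih, zero_mul, zero_add,
        show ((-1 : RatFunc F)) = -(1 : RatFunc F) by norm_num, rderiv_neg, rderiv_one,
        neg_zero, mul_zero]
end more


set_option maxHeartbeats 4000000 in
set_option synthInstance.maxHeartbeats 1000000 in
/-- Let `p` be a prime and `B(x) ∈ Mₙ(𝔽_p(x))` with `Δ : F ↦ F' + B·F` of vanishing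
`p`-curvature (`Δ^p = 0`).  Then `P : F ↦ ∑_{k=0}^{p−1} (−1)^k (x^k/k!) Δ^k(F)` takes
values in `ker Δ`, and every `F` satisfies `F = ∑_{k=0}^{p−1} (x^k/k!)·P(Δ^k(F))`. -/
theorem projector_onto_solutions (p : ℕ) [Fact p.Prime] (n : ℕ)
    (B : Matrix (Fin n) (Fin n) (RatFunc (ZMod p)))
    (Δ : (Fin n → RatFunc (ZMod p)) → (Fin n → RatFunc (ZMod p)))
    (hΔ : ∀ F, Δ F = (fun j => rderiv (F j)) + B.mulVec F)
    (hp : ∀ F, Δ^[p] F = 0)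
    (P : (Fin n → RatFunc (ZMod p)) → (Fin n → RatFunc (ZMod p)))
    (hP : ∀ F, P F = ∑ k ∈ Finset.range p,
      ((-1 : RatFunc (ZMod p)) ^ k * RatFunc.X ^ k / (k.factorial : RatFunc (ZMod p)))
        • Δ^[k] F) :
    (∀ F, Δ (P F) = 0) ∧
      ∀ F : Fin n → RatFunc (ZMod p),
        F = ∑ k ∈ Finset.range p,
          (RatFunc.X ^ k / (k.factorial : RatFunc (ZMod p))) • P (Δ^[k] F) := by
  have hpr : p.Prime := Fact.out
  have hp0 : 0 < p := hpr.pos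
  let K := RatFunc (ZMod p)
  let c : ℕ → K := fun k => (-1 : K) ^ k * RatFunc.X ^ k / (k.factorial : K)
  let u : ℕ → K := fun k => RatFunc.X ^ k / (k.factorial : K)
  have hcc : ∀ k, (-1 : K) ^ k * RatFunc.X ^ k / (k.factorial : K) = c k := fun _ => rfl
  have huu : ∀ k, (RatFunc.X : K) ^ k / (k.factorial : K) = u k := fun _ => rfl
  -- nonzero facts
  have hcast : ∀ m : ℕ, ¬ (p ∣ m) → ((m : K)) ≠ 0 := by
    intro m hm
    have h2 : ((m : ZMod p)) ≠ 0 := by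
      rwa [Ne, ZMod.natCast_eq_zero_iff]
    have h3 : ((m : K)) = algebraMap (ZMod p) K ((m : ZMod p)) := by
      rw [map_natCast]
    rw [h3]
    exact (map_ne_zero_iff _ (algebraMap (ZMod p) K).injective).mpr h2
  have hfacK : ∀ k, k < p → ((k.factorial : K)) ≠ 0 := by
    intro k hk
    exact hcast _ (by rw [Nat.Prime.dvd_factorial hpr]; omega)
  -- basic properties of Δ
  have hΔ0 : Δ 0 = 0 := by
    rw [hΔ]; funext j; simp [rderiv_zero]
  have hΔadd : ∀ G H, Δ (G + H) = Δ G + Δ H := by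
    intro G H; rw [hΔ, hΔ, hΔ]; funext j
    simp [Matrix.mulVec_add, rderiv_add]; ring
  have hΔsmul : ∀ (a : K) G, Δ (a • G) = rderiv a • G + a • Δ G := by
    intro a G; rw [hΔ, hΔ]; funext j
    simp only [Pi.add_apply, Pi.smul_apply, smul_eq_mul, Matrix.mulVec_smul]
    rw [rderiv_mul]; ring
  have hΔsum : ∀ (s : Finset ℕ) (G : ℕ → Fin n → K),
      Δ (∑ k ∈ s, G k) = ∑ k ∈ s, Δ (G k) := by
    intro s G
    induction s using Finset.induction with
    | empty => simpa using hΔ0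
    | insert _ _ h ih => rw [Finset.sum_insert h, Finset.sum_insert h, hΔadd, ih]
  have hiter0 : ∀ m, Δ^[m] (0 : Fin n → K) = 0 := fun m => Function.iterate_fixed hΔ0 m
  have hbig : ∀ (G : Fin n → K) m, p ≤ m → Δ^[m] G = 0 := by
    intro G m hm
    obtain ⟨a, rfl⟩ := Nat.exists_eq_add_of_le hm
    have h2 : Δ^[p + a] G = Δ^[a] (Δ^[p] G) := by
      rw [Nat.add_comm]; exact Function.iterate_add_apply Δ a p G
    rw [h2, hp, hiter0]
  -- derivatives of the coefficients
  have hc0 : rderiv (c 0) = 0 := by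
    have : c 0 = 1 := by simp [c]
    rw [this, rderiv_one]
  have hcsucc : ∀ j, j + 1 < p → rderiv (c (j + 1)) = -(c j) := by
    intro j hj
    have h1 : ((j + 1 : ℕ) : K) ≠ 0 := hcast _ (Nat.not_dvd_of_pos_of_lt (by omega) hj)
    have h2 : ((j.factorial : ℕ) : K) ≠ 0 := hfacK j (by omega)
    have h3 : (((j + 1).factorial : ℕ) : K) ≠ 0 := hfacK _ hj
    show rderiv ((-1 : K) ^ (j+1) * RatFunc.X ^ (j+1) / ((j+1).factorial : K)) = -(c j)
    rw [div_eq_mul_inv, rderiv_mul, rderiv_inv_natCast, mul_zero, add_zero,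
      rderiv_mul, rderiv_neg_one_pow, zero_mul, zero_add, rderiv_X_pow]
    show _ = -((-1 : K) ^ j * RatFunc.X ^ j / (j.factorial : K))
    have hfs : (((j + 1).factorial : ℕ) : K) = ((j + 1 : ℕ) : K) * (j.factorial : K) := by
      rw [Nat.factorial_succ, Nat.cast_mul]
    rw [Nat.add_sub_cancel, hfs, mul_inv, pow_succ, div_eq_mul_inv]
    have hx : ((j + 1 : ℕ) : K) * ((j + 1 : ℕ) : K)⁻¹ = 1 := mul_inv_cancel₀ h1
    linear_combination (-(-1 : K) ^ j * RatFunc.X ^ j * ((j.factorial : K))⁻¹) * hx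
  -- Part 1
  have part1 : ∀ G, Δ (P G) = 0 := by
    intro G
    obtain ⟨m, hm⟩ : ∃ m, p = m + 1 := ⟨p - 1, by omega⟩
    have hrange : Finset.range p = Finset.range (m + 1) := by rw [hm]
    have hterm : ∀ k, Δ (c k • Δ^[k] G) = rderiv (c k) • Δ^[k] G + c k • Δ^[k+1] G := by
      intro k
      rw [hΔsmul]
      exact congrArg (fun v => rderiv (c k) • Δ^[k] G + c k • v)
        (Function.iterate_succ_apply' Δ k G).symm
    rw [hP G]
    simp only [hcc]
    rw [hΔsum, Finset.sum_congr rfl (fun k _ => hterm k), Finset.sum_add_distrib]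
    have hA : ∑ k ∈ Finset.range p, rderiv (c k) • Δ^[k] G =
        -∑ k ∈ Finset.range m, c k • Δ^[k+1] G := by
      rw [hrange, Finset.sum_range_succ', hc0, zero_smul, add_zero]
      rw [Finset.sum_congr rfl (fun i (hi : i ∈ Finset.range m) => by
        rw [hcsucc i (by have := Finset.mem_range.mp hi; omega)])]
      simp [neg_smul, Finset.sum_neg_distrib]
    have hB : ∑ k ∈ Finset.range p, c k • Δ^[k+1] G =
        ∑ k ∈ Finset.range m, c k • Δ^[k+1] G := by
      rw [hrange, Finset.sum_range_succ]
      have : Δ^[m+1] G = 0 := by rw [← hm]; exact hp G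
      rw [this, smul_zero, add_zero]
    rw [hA, hB, neg_add_cancel]
  refine ⟨part1, ?_⟩
  -- Part 2
  intro F
  simp only [huu]
  have hPit : ∀ k, P (Δ^[k] F) = ∑ j ∈ Finset.range p, c j • Δ^[j + k] F := by
    intro k
    rw [hP]
    simp only [hcc]
    exact Finset.sum_congr rfl fun j _ => by rw [Function.iterate_add_apply]
  have step1 : ∑ k ∈ Finset.range p, u k • P (Δ^[k] F) =
      ∑ k ∈ Finset.range p, ∑ j ∈ Finset.range p, (u k * c j) • Δ^[j + k] F := by
    refine Finset.sum_congr rfl fun k _ => ?_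
    rw [hPit, Finset.smul_sum]
    exact Finset.sum_congr rfl fun j _ => by rw [smul_smul]
  have step2 : ∀ k ∈ Finset.range p, ∑ j ∈ Finset.range p, (u k * c j) • Δ^[j + k] F =
      ∑ j ∈ Finset.range (p - k), (u k * c j) • Δ^[j + k] F := by
    intro k hk
    symm
    apply Finset.sum_subset (Finset.range_subset_range.mpr (by omega))
    intro j hj hj2
    rw [Finset.mem_range] at hj hj2
    rw [hbig F (j + k) (by omega), smul_zero]
  have flip := Finset.sum_range_diag_flip p (fun a b => (u a * c b) • Δ^[b + a] F)
  have step3 : ∑ k ∈ Finset.range p, ∑ j ∈ Finset.range (p - k), (u k * c j) • Δ^[j + k] F =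
      ∑ m ∈ Finset.range p, ∑ k ∈ Finset.range (m + 1), (u k * c (m - k)) • Δ^[(m - k) + k] F :=
    flip.symm
  have hcoef : ∀ m, m < p → (∑ k ∈ Finset.range (m + 1), u k * c (m - k)) =
      if m = 0 then (1 : K) else 0 := by
    intro m hmp
    rcases eq_or_ne m 0 with rfl | hm
    · simp [u, c]
    · rw [if_neg hm]
      have hterm : ∀ k ∈ Finset.range (m + 1), u k * c (m - k) =
          RatFunc.X ^ m * ((-1 : K) ^ (m - k) / ((k.factorial : K) * ((m - k).factorial : K))) := by
        intro k hk
        have hkm : k ≤ m := Nat.lt_succ_iff.mp (Finset.mem_range.mp hk)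
        show (RatFunc.X ^ k / (k.factorial : K)) *
            ((-1 : K) ^ (m - k) * RatFunc.X ^ (m - k) / ((m - k).factorial : K)) = _
        have hX : (RatFunc.X : K) ^ k * RatFunc.X ^ (m - k) = RatFunc.X ^ m := by
          rw [← pow_add, Nat.add_sub_cancel' hkm]
        rw [← hX]
        ring
      rw [Finset.sum_congr rfl hterm, ← Finset.mul_sum,
        alt_fact_sum m hm (fun k hk => hfacK k (by omega)), mul_zero]
  have step4 : ∀ m ∈ Finset.range p,
      ∑ k ∈ Finset.range (m + 1), (u k * c (m - k)) • Δ^[(m - k) + k] F =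
        (if m = 0 then (1 : K) else 0) • Δ^[m] F := by
    intro m hmr
    have : ∑ k ∈ Finset.range (m + 1), (u k * c (m - k)) • Δ^[(m - k) + k] F =
        (∑ k ∈ Finset.range (m + 1), u k * c (m - k)) • Δ^[m] F := by
      rw [Finset.sum_smul]
      refine Finset.sum_congr rfl fun k hk => ?_
      rw [Nat.sub_add_cancel (Nat.lt_succ_iff.mp (Finset.mem_range.mp hk))]
    rw [this, hcoef m (Finset.mem_range.mp hmr)]
  rw [step1, Finset.sum_congr rfl step2, step3, Finset.sum_congr rfl step4]
  simp only [ite_smul, one_smul, zero_smul]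
  rw [Finset.sum_ite_eq' (Finset.range p) 0 (fun m => Δ^[m] F)]
  simp [hp0]
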